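/- Let σ be a finite nonnegative measure on ℝ with compact support contained in [-R, R], and let s_j = ∫ u^j dσ(u) be its moments. Then for each N ∈ ℕ and for z = iy with y → ∞, one has y^{2N+1} · |f(iy) + Σ_{j=0}^{2N-1} s_j/(iy)^{j+1} + s_{2N}/(iy)^{2N+1}| → 0, where f(z) = ∫ dσ(u)/(u - z) is the Stieltjes transform of σ. -/

import Mathlib

open MeasureTheory Filter Complex

lemma pt_identity (n : ℕ) (z w : ℂ) (hz : z ≠ 0) (hw : w ≠ z) :
    (w - z)⁻¹ + ∑ j ∈ Finset.range n, w ^ j / z ^ (j + 1)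
      = w ^ n / (z ^ n * (w - z)) := by
  have hwz : w - z ≠ 0 := sub_ne_zero.mpr hw
  have hr : w / z ≠ 1 := by
    intro h
    rw [div_eq_one_iff_eq hz] at h
    exact hw h
  have hsum : ∑ j ∈ Finset.range n, w ^ j / z ^ (j + 1)
      = ((w/z)^n - 1) / (w - z) := by
    have h1 : ∀ j, w ^ j / z ^ (j+1) = (w/z)^j / z := by
      intro j; rw [div_pow, pow_succ]; field_simp
    simp_rw [h1]
    rw [← Finset.sum_div, geom_sum_eq hr, div_div]
    congr 1
    field_simp
  rw [hsum, div_pow]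
  field_simp
  ring


theorem hamburger_nevanlinna_imaginary_axis
    (σ : Measure ℝ) [IsFiniteMeasure σ] (R : ℝ) (hR : 0 < R)
    (hsupp : σ (Set.Icc (-R) R)ᶜ = 0)
    (s : ℕ → ℝ) (hs : ∀ j, s j = ∫ u, u ^ j ∂σ)
    (f : ℂ → ℂ) (hf : ∀ z : ℂ, z.im ≠ 0 → f z = ∫ u, ((u : ℂ) - z)⁻¹ ∂σ)
    (N : ℕ) :
    Tendsto (fun y : ℝ =>
        y ^ (2 * N + 1) *
          ‖f (Complex.I * y) +
            (∑ j ∈ Finset.range (2 * N), (s j : ℂ) / (Complex.I * y) ^ (j + 1)) +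
            (s (2 * N) : ℂ) / (Complex.I * y) ^ (2 * N + 1)‖)
      atTop (nhds 0) := by
  set n := 2 * N + 1 with hn
  have hae : ∀ᵐ u ∂σ, u ∈ Set.Icc (-R) R := by
    rw [ae_iff]
    convert hsupp using 2
    rfl
  have key : ∀ y : ℝ, 0 < y →
      y ^ n * ‖f (Complex.I * y) +
            (∑ j ∈ Finset.range (2 * N), (s j : ℂ) / (Complex.I * y) ^ (j + 1)) +
            (s (2 * N) : ℂ) / (Complex.I * y) ^ (2 * N + 1)‖
        ≤ R ^ n * (σ Set.univ).toReal / y := by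
    intro y hy
    set z : ℂ := Complex.I * y with hz
    have hzim : z.im = y := by simp [hz]
    have hzne : z ≠ 0 := by
      intro h; rw [h] at hzim; simp at hzim; exact hy.ne' hzim.symm
    have habsz : ‖z‖ = y := by
      simp [hz, Complex.norm_def, Complex.normSq_apply, hy.le]
    have huz : ∀ u : ℝ, (u : ℂ) ≠ z := by
      intro u h
      have := congrArg Complex.im h
      simp [hzim] at this
      exact hy.ne' this.symm
    have huzs : ∀ u : ℝ, (u : ℂ) - z ≠ 0 := fun u => sub_ne_zero.mpr (huz u)
    have hlow : ∀ u : ℝ, y ≤ ‖(u : ℂ) - z‖ := by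
      intro u
      have := Complex.abs_im_le_norm ((u : ℂ) - z)
      simpa [hzim, abs_of_pos hy] using this
    have hmeas : ∀ j : ℕ, Integrable (fun u : ℝ => (u : ℂ) ^ j) σ := by
      intro j
      apply Integrable.mono' (integrable_const (R ^ j))
      · exact (Continuous.aestronglyMeasurable (by continuity))
      · filter_upwards [hae] with u hu
        simp only [norm_pow, Complex.norm_real]
        exact pow_le_pow_left₀ (norm_nonneg u)
          (by rw [Real.norm_eq_abs]; exact abs_le.mpr ⟨hu.1, hu.2⟩) j
    have hint_inv : Integrable (fun u : ℝ => ((u : ℂ) - z)⁻¹) σ := by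
      apply Integrable.mono' (integrable_const (y⁻¹))
      · exact Continuous.aestronglyMeasurable
          (Continuous.inv₀ (by continuity) huzs)
      · refine Eventually.of_forall fun u => ?_
        rw [norm_inv]
        exact inv_anti₀ hy (hlow u)
    have hmom : ∀ j : ℕ, (s j : ℂ) = ∫ u, (u : ℂ) ^ j ∂σ := by
      intro j
      have h := integral_ofReal (𝕜 := ℂ) (f := fun u : ℝ => u ^ j) (μ := σ)
      rw [hs j]
      simp only [← Complex.ofReal_pow]
      exact h.symm
    have hsum_eq : f z + (∑ j ∈ Finset.range (2 * N), (s j : ℂ) / z ^ (j + 1)) +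
        (s (2 * N) : ℂ) / z ^ (2 * N + 1)
        = ∫ u, (u : ℂ) ^ n / (z ^ n * ((u : ℂ) - z)) ∂σ := by
      have h0 : f z + (∑ j ∈ Finset.range (2 * N), (s j : ℂ) / z ^ (j + 1)) +
          (s (2 * N) : ℂ) / z ^ (2 * N + 1)
          = f z + ∑ j ∈ Finset.range n, (s j : ℂ) / z ^ (j + 1) := by
        rw [hn, Finset.sum_range_succ]; ring
      rw [h0, hf z (by rw [hzim]; exact hy.ne')]
      have hsum2 : ∑ j ∈ Finset.range n, (s j : ℂ) / z ^ (j + 1)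
          = ∫ u, ∑ j ∈ Finset.range n, (u : ℂ) ^ j / z ^ (j + 1) ∂σ := by
        rw [integral_finset_sum]
        · congr 1; ext j
          rw [hmom j, integral_div]
        · intro j _; exact (hmeas j).div_const _
      rw [hsum2, ← integral_add hint_inv]
      · apply integral_congr_ae
        refine Eventually.of_forall fun u => ?_
        exact pt_identity n z u hzne (huz u)
      · apply integrable_finset_sum
        intro j _; exact (hmeas j).div_const _
    rw [hsum_eq]
    have hb : ‖∫ u, (u : ℂ) ^ n / (z ^ n * ((u : ℂ) - z)) ∂σ‖
        ≤ R ^ n / (y ^ n * y) * (σ Set.univ).toReal := by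
      apply norm_integral_le_of_norm_le_const
      filter_upwards [hae] with u hu
      rw [norm_div, norm_mul, norm_pow, norm_pow,
        habsz, Complex.norm_real, Real.norm_eq_abs]
      gcongr
      · exact abs_le.mpr ⟨hu.1, hu.2⟩
      · exact hlow u
    have h2 := mul_le_mul_of_nonneg_left hb (by positivity : (0:ℝ) ≤ y ^ n)
    refine h2.trans (le_of_eq ?_)
    field_simp
  apply squeeze_zero' (g := fun y : ℝ => R ^ n * (σ Set.univ).toReal / y)
  · filter_upwards [eventually_gt_atTop (0:ℝ)] with y hy
    positivity
  · filter_upwards [eventually_gt_atTop (0:ℝ)] with y hy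
    exact key y hy
  · exact Tendsto.div_atTop tendsto_const_nhds tendsto_id
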